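/- In the interior of the moment polytope, 𝓛₂ intersects each orbit of the second circle action at most once: let (X,Y,Z) and (X',Y',Z') be real triples with X²+Y²+Z²=1, X'²+Y'²+Z'²=1, X²+Y² ≠ 0 and Z ≠ 0, and let θ ∈ ℝ. If [X'−iY' : √2·i·Z' : X'+iY'] = [X−iY : √2·i·Z : e^{iθ}(X+iY)] in ℙ(ℂ³), then e^{iθ} = 1. -/

import Mathlib

open Complex

/-- The vector `(X - iY, √2 i Z, X + iY)` in `ℂ³`. -/
noncomputable def sphereVec (X Y Z : ℝ) : Fin 3 → ℂ :=
  ![(X : ℂ) - Complex.I * Y, (Real.sqrt 2 : ℂ) * Complex.I * Z, (X : ℂ) + Complex.I * Y]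

lemma sphereVec_ne_zero {X Y Z : ℝ} (h : X ^ 2 + Y ^ 2 + Z ^ 2 = 1) :
    sphereVec X Y Z ≠ 0 := by
  intro h0
  have h0' : (X : ℂ) - Complex.I * Y = 0 := congrFun h0 0
  have h2' : (X : ℂ) + Complex.I * Y = 0 := congrFun h0 2
  have h1' : (Real.sqrt 2 : ℂ) * Complex.I * Z = 0 := congrFun h0 1
  have hX : X = 0 := by
    have := congrArg Complex.re (by linear_combination h0' + h2' : (2 : ℂ) * X = 0)
    simpa using this
  have hY : Y = 0 := by
    have := congrArg Complex.im (by linear_combination h2' - h0' : (2 : ℂ) * Complex.I * Y = 0)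
    simpa using this
  have hZ : Z = 0 := by
    rcases mul_eq_zero.mp h1' with h' | h'
    · rcases mul_eq_zero.mp h' with h'' | h''
      · exact absurd h'' (by simp [Complex.ext_iff, Real.sqrt_eq_zero'])
      · exact absurd h'' Complex.I_ne_zero
    · exact_mod_cast h'
  rw [hX, hY, hZ] at h
  norm_num at h

/-- The Chiang-type lagrangian `𝓛₂ ⊆ ℙ(ℂ³)`, in its real description. -/
noncomputable def ChiangL2 : Set (Projectivization ℂ (Fin 3 → ℂ)) :=
  {P | ∃ (X Y Z : ℝ) (h : X ^ 2 + Y ^ 2 + Z ^ 2 = 1),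
    P = Projectivization.mk ℂ (sphereVec X Y Z) (sphereVec_ne_zero h)}

lemma act2Vec_ne_zero {X Y Z : ℝ} (θ : ℝ) (h : X ^ 2 + Y ^ 2 + Z ^ 2 = 1) :
    ![(X : ℂ) - Complex.I * Y, (Real.sqrt 2 : ℂ) * Complex.I * Z,
      Complex.exp (Complex.I * θ) * ((X : ℂ) + Complex.I * Y)] ≠ 0 := by
  intro h0
  have e0 : (X : ℂ) - Complex.I * Y = 0 := congrFun h0 0
  have e1 : (Real.sqrt 2 : ℂ) * Complex.I * Z = 0 := congrFun h0 1
  have e2 : Complex.exp (Complex.I * θ) * ((X : ℂ) + Complex.I * Y) = 0 := congrFun h0 2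
  have e2' : (X : ℂ) + Complex.I * Y = 0 :=
    (mul_eq_zero.mp e2).resolve_left (Complex.exp_ne_zero _)
  apply sphereVec_ne_zero h
  funext i
  fin_cases i
  · simpa [sphereVec] using e0
  · simpa [sphereVec] using e1
  · simpa [sphereVec] using e2'

/-- In the interior of the moment polytope, `𝓛₂` intersects each orbit of
the second circle action `[z₀ : z₁ : z₂] ↦ [z₀ : z₁ : e^{iθ} z₂]` at most once. -/
theorem stmt_10 (X Y Z X' Y' Z' θ : ℝ)
    (h : X ^ 2 + Y ^ 2 + Z ^ 2 = 1) (h' : X' ^ 2 + Y' ^ 2 + Z' ^ 2 = 1)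
    (hXY : X ^ 2 + Y ^ 2 ≠ 0) (hZ : Z ≠ 0)
    (heq : Projectivization.mk ℂ (sphereVec X' Y' Z') (sphereVec_ne_zero h') =
      Projectivization.mk ℂ
        ![(X : ℂ) - Complex.I * Y, (Real.sqrt 2 : ℂ) * Complex.I * Z,
          Complex.exp (Complex.I * θ) * ((X : ℂ) + Complex.I * Y)]
        (act2Vec_ne_zero θ h)) :
    Complex.exp (Complex.I * θ) = 1 := by
  rw [Projectivization.mk_eq_mk_iff] at heq
  obtain ⟨a, ha⟩ := heq
  have e0 : (a : ℂ) * ((X : ℂ) - Complex.I * Y) = (X' : ℂ) - Complex.I * Y' := by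
    simpa [sphereVec, Units.smul_def] using congrFun ha 0
  have e1 : (a : ℂ) * ((Real.sqrt 2 : ℂ) * Complex.I * Z) =
      (Real.sqrt 2 : ℂ) * Complex.I * Z' := by
    simpa [sphereVec, Units.smul_def] using congrFun ha 1
  have e2 : (a : ℂ) * (Complex.exp (Complex.I * θ) * ((X : ℂ) + Complex.I * Y)) =
      (X' : ℂ) + Complex.I * Y' := by
    simpa [sphereVec, Units.smul_def] using congrFun ha 2
  have hs2 : (Real.sqrt 2 : ℂ) ≠ 0 := by
    exact_mod_cast Real.sqrt_ne_zero'.mpr (by norm_num)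
  have hZc : (Z : ℂ) ≠ 0 := by exact_mod_cast hZ
  have e1' : ((Real.sqrt 2 : ℂ) * Complex.I) * ((a : ℂ) * Z) =
      ((Real.sqrt 2 : ℂ) * Complex.I) * Z' := by linear_combination e1
  have haZ : (a : ℂ) * Z = Z' :=
    mul_left_cancel₀ (mul_ne_zero hs2 Complex.I_ne_zero) e1'
  have haim : (a : ℂ).im * Z = 0 := by simpa using congrArg Complex.im haZ
  have hconj : (starRingEnd ℂ) (a : ℂ) = a :=
    Complex.conj_eq_iff_im.mpr ((mul_eq_zero.mp haim).resolve_right hZ)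
  have e0c : (a : ℂ) * ((X : ℂ) + Complex.I * Y) = (X' : ℂ) + Complex.I * Y' := by
    have := congrArg (starRingEnd ℂ) e0
    simp only [map_mul, map_sub, map_add, Complex.conj_I, hconj,
      Complex.conj_ofReal] at this
    linear_combination this
  have hXYc : (X : ℂ) + Complex.I * Y ≠ 0 := by
    intro hh
    apply hXY
    have hre : X = 0 := by
      have := congrArg Complex.re hh; simpa using this
    have him : Y = 0 := by
      have := congrArg Complex.im hh; simpa using this
    simp [hre, him]
  have ha0 : (a : ℂ) ≠ 0 := Units.ne_zero a
  have key : (a : ℂ) * (Complex.exp (Complex.I * θ) * ((X : ℂ) + Complex.I * Y)) =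
      (a : ℂ) * ((X : ℂ) + Complex.I * Y) := e2.trans e0c.symm
  have h3 := mul_left_cancel₀ ha0 key
  exact mul_right_cancel₀ hXYc (by linear_combination h3)
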